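/- arXiv:1210.5488 — 7 statements merged into one kernel-verified Lean document; each statement's English description precedes it below -/
import Mathlib

section
/- For any sequences f = (f_1,…,f_N) and g = (g_1,…,g_N) in H^N, the mixed frame potential equals the sum of the squares of the eigenvalues of the mixed frame operator counted with algebraic multiplicity: FP(f,g) = ∑_{n=1}^d λ_n², where λ_1,…,λ_d is the multiset of roots of the characteristic polynomial of TU*. -/
open scoped ComplexInnerProductSpace

/- `H` is a complex inner product space of finite dimension `d = Module.finrank ℂ H`.
The paper's inner product `⟨x, y⟩` is linear in the first argument, hence it corresponds to
Mathlib's `⟪y, x⟫ = inner y x` (Mathlib's inner product is linear in the second argument). -/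
variable {H : Type*} [NormedAddCommGroup H] [InnerProductSpace ℂ H] [FiniteDimensional ℂ H]

/-- The mixed frame operator `TU⋆ : x ↦ ∑ m, ⟨x, g m⟩ f m` (paper convention),
i.e. `x ↦ ∑ m, ⟪g m, x⟫ • f m` in Mathlib's convention. Note that `UT⋆` for the pair
`(f, g)` is then `mixedOp g f`. -/
noncomputable def mixedOp {N : ℕ} (f g : Fin N → H) : H →ₗ[ℂ] H where
  toFun x := ∑ m, (⟪g m, x⟫) • f m
  map_add' x y := by
    simp [inner_add_right, add_smul, Finset.sum_add_distrib]
  map_smul' c x := by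
    simp [inner_smul_right, mul_smul, Finset.smul_sum]

/-- The mixed frame potential `FP(f,g) = ∑ m, ∑ n, ⟨f m, g n⟩ * ⟨f n, g m⟩`
(paper convention: inner product linear in the first argument). -/
noncomputable def mixedFP {N : ℕ} (f g : Fin N → H) : ℂ :=
  ∑ m, ∑ n, ⟪g n, f m⟫ * ⟪g m, f n⟫

open Polynomial Matrix in
lemma charpoly_mul_self_roots {n : Type*} [Fintype n] [DecidableEq n] (A : Matrix n n ℂ) :
    (A * A).charpoly.roots = A.charpoly.roots.map (fun z => z ^ 2) := by
  classical
  set q := A.charpoly with hq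
  set μ := q.roots with hμ
  have hsplit : q.Splits := IsAlgClosed.splits q
  have hqprod : q = (μ.map fun z => X - C z).prod :=
    hsplit.eq_prod_roots_of_monic A.charpoly_monic
  have hcard : Multiset.card μ = Fintype.card n := by
    rw [hμ, splits_iff_card_roots.mp hsplit, hq, charpoly_natDegree_eq_dim]
  have key : (A * A).charpoly = (μ.map fun z => X - C (z ^ 2)).prod := by
    apply Polynomial.expand_injective (R := ℂ) (n := 2) two_pos
    have hrhs : (expand ℂ 2) ((μ.map fun z => X - C (z ^ 2)).prod) =
        (μ.map fun z => X - C z).prod * (μ.map fun z => X + C z).prod := by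
      rw [map_multiset_prod, Multiset.map_map, ← Multiset.prod_map_mul]
      congr 1
      apply Multiset.map_congr rfl
      intro z _
      simp only [Function.comp_apply, map_sub, expand_X, expand_C, map_pow]
      ring
    have hdetmap : (expand ℂ 2) ((A * A).charpoly) =
        ((charmatrix (A * A)).map (expand ℂ 2 : ℂ[X] →+* ℂ[X])).det := by
      rw [Matrix.charpoly, AlgHom.map_det]; rfl
    have hmat : (charmatrix (A * A)).map (expand ℂ 2 : ℂ[X] →+* ℂ[X]) =
        charmatrix A * (scalar n X + A.map C) := by
      have hcomm : scalar n (X : ℂ[X]) * (A.map C) = (A.map C) * scalar n X :=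
        (Matrix.scalar_commute (X : ℂ[X]) (fun r => Commute.all _ _) (A.map C)).eq
      have hfac : charmatrix A * (scalar n X + A.map C)
          = scalar n X * scalar n X - (A.map C) * (A.map C) := by
        have hch : charmatrix A = scalar n X - A.map C := by
          rw [charmatrix]; rfl
        rw [hch, sub_mul, mul_add, mul_add, hcomm]
        abel
      rw [hfac]
      ext i j
      by_cases h : i = j <;>
        simp [charmatrix, h, Matrix.scalar_apply, Matrix.diagonal_apply, Matrix.mul_apply,
          Matrix.map_apply, expand_X, sq, Finset.mul_sum, apply_ite (expand ℂ 2)] <;>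
        ring
    have hψmat : (aeval (-X : ℂ[X])).mapMatrix (charmatrix A) =
        - (scalar n X + A.map C) := by
      ext i j
      by_cases h : i = j <;>
        simp [charmatrix, h, Matrix.scalar_apply, Matrix.diagonal_apply, Matrix.map_apply] <;>
        ring
    have hψq : (aeval (-X : ℂ[X])) q =
        (-1) ^ (Fintype.card n) * (scalar n X + A.map C).det := by
      rw [hq, Matrix.charpoly, AlgHom.map_det]
      rw [hψmat, Matrix.det_neg]
    have hψq' : (aeval (-X : ℂ[X])) q =
        (-1) ^ (Fintype.card n) * (μ.map fun z => X + C z).prod := by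
      conv_lhs => rw [hqprod]
      rw [map_multiset_prod, Multiset.map_map]
      have hneg : (μ.map ((aeval (-X : ℂ[X])) ∘ fun z => X - C z)) =
          ((μ.map fun z => X + C z).map Neg.neg) := by
        rw [Multiset.map_map]
        apply Multiset.map_congr rfl
        intro z _
        simp only [Function.comp_apply, map_sub, aeval_X, aeval_C, algebraMap_eq]
        ring
      rw [hneg, Multiset.prod_map_neg, Multiset.card_map, hcard]
    have hdet : (scalar n X + A.map C).det = (μ.map fun z => X + C z).prod :=
      mul_left_cancel₀ (pow_ne_zero _ (neg_ne_zero.mpr (one_ne_zero)))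
        (hψq.symm.trans hψq')
    rw [hdetmap, hmat, Matrix.det_mul, ← Matrix.charpoly, ← hq, hdet, hrhs]
    conv_lhs => rw [hqprod]
  rw [key]
  have hmm : (μ.map fun z => X - C (z ^ 2)) = ((μ.map fun z => z ^ 2).map fun z => X - C z) := by
    rw [Multiset.map_map]; rfl
  rw [hmm, roots_multiset_prod_X_sub_C]

open Polynomial Matrix in
lemma trace_comp_self_eq_sum_sq_roots (T : H →ₗ[ℂ] H) :
    LinearMap.trace ℂ H (T ∘ₗ T) =
      ((LinearMap.charpoly T).roots.map (fun z => z ^ 2)).sum := by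
  let b := Module.Free.chooseBasis ℂ H
  rw [LinearMap.trace_eq_matrix_trace ℂ b, LinearMap.toMatrix_comp b b b,
    ← LinearMap.charpoly_toMatrix T b, ← charpoly_mul_self_roots,
    ← Matrix.trace_eq_sum_roots_charpoly]

lemma trace_mixedOp_comp_self {N : ℕ} (f g : Fin N → H) :
    LinearMap.trace ℂ H ((mixedOp f g) ∘ₗ (mixedOp f g)) = mixedFP f g := by
  let b := stdOrthonormalBasis ℂ H
  have hT : ∀ x : H, (mixedOp f g) x = ∑ m, (⟪g m, x⟫) • f m := fun _ => rfl
  rw [LinearMap.trace_eq_matrix_trace ℂ b.toBasis, Matrix.trace, mixedFP]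
  simp only [Matrix.diag_apply, LinearMap.toMatrix_apply, OrthonormalBasis.coe_toBasis,
    OrthonormalBasis.coe_toBasis_repr_apply, OrthonormalBasis.repr_apply_apply,
    LinearMap.comp_apply, hT, inner_sum, inner_smul_right, Finset.mul_sum]
  simp only [Finset.sum_mul]
  rw [Finset.sum_comm]
  conv_rhs => rw [Finset.sum_comm]
  refine Finset.sum_congr rfl fun n _ => ?_
  rw [Finset.sum_comm]
  refine Finset.sum_congr rfl fun m _ => ?_
  calc ∑ i, ⟪g m, b i⟫ * ⟪g n, f m⟫ * ⟪b i, f n⟫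
      = ⟪g n, f m⟫ * ∑ i, ⟪g m, b i⟫ * ⟪b i, f n⟫ := by
        rw [Finset.mul_sum]; congr 1; funext i; ring
    _ = ⟪g n, f m⟫ * ⟪g m, f n⟫ := by rw [b.sum_inner_mul_inner]

/-- the mixed frame potential equals the sum of the squares of the eigenvalues
of the mixed frame operator counted with algebraic multiplicity (the multiset of roots of
the characteristic polynomial of `TU⋆`). -/
theorem mixedFP_eq_sum_sq_eigenvalues {N : ℕ} (hd : 1 ≤ Module.finrank ℂ H)
    (f g : Fin N → H) :
    mixedFP f g = ((LinearMap.charpoly (mixedOp f g)).roots.map (fun z => z ^ 2)).sum := by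
  rw [← trace_mixedOp_comp_self f g, trace_comp_self_eq_sum_sq_roots]
end

section
/- Let α = (α_1,…,α_N) ∈ ℂ^N and let (f,g) ∈ S̃(α). If all the roots of the characteristic polynomial of the mixed frame operator TU* are real, then FP(f,g) and ∑_{m=1}^N α_m are real numbers, and FP(f,g) ≥ (1/d)·(∑_{m=1}^N α_m)². -/
open scoped ComplexInnerProductSpace

/- `H` is a complex inner product space of finite dimension `d = Module.finrank ℂ H`.
The paper's inner product `⟨x, y⟩` is linear in the first argument, hence it corresponds to
Mathlib's `⟪y, x⟫ = inner y x` (Mathlib's inner product is linear in the second argument). -/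
section MatrixLemmas

open Polynomial Matrix

variable {n : Type*} [Fintype n] [DecidableEq n]

private lemma aeval_charpoly' (A : Matrix n n ℂ) (p : ℂ[X]) :
    aeval p A.charpoly = det (scalar n p - A.map C) := by
  rw [Matrix.charpoly, AlgHom.map_det]
  congr 1
  ext i j
  simp [charmatrix_apply, Matrix.scalar, diagonal, Matrix.map_apply, apply_ite (aeval p)]

private lemma det_scalar_add' (A : Matrix n n ℂ) :
    ((-1 : ℂ[X]) ^ Fintype.card n) * det (scalar n X + A.map C) = aeval (-X : ℂ[X]) A.charpoly := by
  rw [aeval_charpoly']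
  have h : scalar n (-X : ℂ[X]) - A.map C = -(scalar n X + A.map C) := by
    simp only [map_neg, neg_add]
    abel
  rw [h, det_neg]

private lemma charpoly_sq' (A : Matrix n n ℂ) :
    (A ^ 2).charpoly = (A.charpoly.roots.map (fun l => X - C (l ^ 2))).prod := by
  have hmon := A.charpoly_monic
  have hsp := IsAlgClosed.splits A.charpoly
  have hA : A.charpoly = (A.charpoly.roots.map (fun a => X - C a)).prod :=
    hsp.eq_prod_roots_of_monic hmon
  set R := A.charpoly.roots with hR
  have hcard : Multiset.card R = Fintype.card n := by
    rw [hR, splits_iff_card_roots.mp hsp, charpoly_natDegree_eq_dim]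
  have key : aeval ((X:ℂ[X])^2) (A^2).charpoly
      = aeval ((X:ℂ[X])^2) (R.map (fun l => X - C (l ^ 2))).prod := by
    rw [aeval_charpoly']
    have hB : (A ^ 2).map C = (A.map C) ^ 2 := by
      simp [pow_two, Matrix.map_mul]
    have hcomm : Commute (scalar n (X : ℂ[X])) (A.map C) :=
      Matrix.scalar_commute _ (fun r' => Commute.all _ _) _
    have hfac : scalar n ((X:ℂ[X])^2) - (A^2).map C
        = (scalar n X + A.map C) * (scalar n X - A.map C) := by
      rw [hB, map_pow, Commute.sq_sub_sq hcomm]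
    rw [hfac, det_mul]
    have h1 : det (scalar n (X:ℂ[X]) - A.map C) = A.charpoly := by
      rw [← aeval_charpoly']; simp
    have h2 : det (scalar n (X:ℂ[X]) + A.map C) = (R.map (fun l => X + C l)).prod := by
      have h := det_scalar_add' A
      conv_rhs at h => rw [hA]
      rw [map_multiset_prod, Multiset.map_map] at h
      have h3 : (R.map (fun a => aeval (-X:ℂ[X]) (X - C a))).prod
          = ((-1:ℂ[X])^Fintype.card n) * (R.map (fun a => X + C a)).prod := by
        have h4 : (R.map (fun a => aeval (-X:ℂ[X]) (X - C a)))
            = (R.map (fun a => (-1 : ℂ[X]) * (X + C a))) := by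
          apply Multiset.map_congr rfl
          intro a _
          simp
          ring
        rw [h4]
        rw [show (fun a => (-1 : ℂ[X]) * (X + C a)) = (fun a => (fun _ => (-1:ℂ[X])) a * (X + C a)) from rfl]
        rw [Multiset.prod_map_mul, Multiset.map_const', Multiset.prod_replicate, hcard]
      simp only [Function.comp] at h
      rw [h3] at h
      have hne : ((-1:ℂ[X])^Fintype.card n) ≠ 0 := by
        apply pow_ne_zero; exact neg_ne_zero.mpr one_ne_zero
      exact mul_left_cancel₀ hne h
    rw [h1, h2, map_multiset_prod, Multiset.map_map, mul_comm]
    conv_lhs => rw [hA]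
    rw [← Multiset.prod_map_mul]
    apply congrArg
    apply Multiset.map_congr rfl
    intro a _
    simp [Function.comp]
    ring
  have hcomp : ((A^2).charpoly - (R.map (fun l => X - C (l^2))).prod).comp ((X:ℂ[X])^2) = 0 := by
    rw [comp_eq_aeval, map_sub, key, sub_self]
  rcases comp_eq_zero_iff.mp hcomp with h | ⟨_, h⟩
  · exact sub_eq_zero.mp h
  · exfalso
    simp only [coeff_X_pow, if_neg (by norm_num : ¬ (0 = 2)), map_zero] at h
    exact pow_ne_zero 2 (X_ne_zero (R := ℂ)) (by simpa using h)

private lemma trace_sq_eq' (A : Matrix n n ℂ) :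
    (A * A).trace = (A.charpoly.roots.map (fun l => l ^ 2)).sum := by
  have h := Matrix.trace_eq_sum_roots_charpoly (A ^ 2)
  rw [charpoly_sq',
    show (fun l : ℂ => X - C (l^2)) = (fun a : ℂ => X - C a) ∘ (fun l : ℂ => l^2) from rfl,
    ← Multiset.map_map, Polynomial.roots_multiset_prod_X_sub_C] at h
  rw [← pow_two]
  exact h

end MatrixLemmas

private lemma list_map_sum_eq (l : List ℝ) (f : ℝ → ℝ) :
    (l.map f).sum = ∑ i ∈ Finset.range l.length, f (l.getD i 0) := by
  induction l with
  | nil => simp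
  | cons a t ih => simp [Finset.sum_range_succ', ih, add_comm]

private lemma multiset_sq_sum_le (R : Multiset ℝ) :
    R.sum ^ 2 ≤ (Multiset.card R : ℝ) * (R.map (fun r => r ^ 2)).sum := by
  obtain ⟨l, rfl⟩ : ∃ l : List ℝ, R = ↑l := ⟨R.toList, (Multiset.coe_toList R).symm⟩
  have h1 : (l : Multiset ℝ).sum = ∑ i ∈ Finset.range l.length, l.getD i 0 := by
    have := list_map_sum_eq l id
    simpa using this
  have h2 : ((l : Multiset ℝ).map (fun r => r ^ 2)).sum
      = ∑ i ∈ Finset.range l.length, (l.getD i 0) ^ 2 := by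
    rw [Multiset.map_coe, Multiset.sum_coe]
    exact list_map_sum_eq l (fun r => r ^ 2)
  rw [h1, h2]
  have := sq_sum_le_card_mul_sum_sq (s := Finset.range l.length) (f := fun i => l.getD i 0)
  simpa using this

variable {H : Type*} [NormedAddCommGroup H] [InnerProductSpace ℂ H] [FiniteDimensional ℂ H]

private lemma trace_mixedOp {N : ℕ} (f g : Fin N → H) :
    LinearMap.trace ℂ H (mixedOp f g) = ∑ m, ⟪g m, f m⟫ := by
  classical
  set b := stdOrthonormalBasis ℂ H
  rw [LinearMap.trace_eq_matrix_trace ℂ b.toBasis]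
  rw [Matrix.trace]
  have hdiag : ∀ i, (LinearMap.toMatrix b.toBasis b.toBasis (mixedOp f g)) i i
      = ∑ m, ⟪g m, b i⟫ * ⟪b i, f m⟫ := by
    intro i
    rw [LinearMap.toMatrix_apply]
    rw [b.coe_toBasis, b.coe_toBasis_repr_apply, b.repr_apply_apply]
    show ⟪b i, ∑ m, (⟪g m, b i⟫) • f m⟫ = _
    rw [inner_sum]
    simp [inner_smul_right]
  simp only [Matrix.diag_apply, hdiag]
  rw [Finset.sum_comm]
  congr 1
  funext m
  exact b.sum_inner_mul_inner (g m) (f m)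

private lemma comp_mixedOp {N : ℕ} (f g : Fin N → H) :
    (mixedOp f g) ∘ₗ (mixedOp f g) = mixedOp (fun m => (mixedOp f g) (f m)) g := by
  apply LinearMap.ext
  intro x
  show (mixedOp f g) ((mixedOp f g) x) = _
  have h1 : (mixedOp f g) x = ∑ n, (⟪g n, x⟫) • f n := rfl
  rw [h1, map_sum]
  simp only [map_smul]
  rfl

private lemma mixedFP_eq_trace {N : ℕ} (f g : Fin N → H) :
    mixedFP f g = LinearMap.trace ℂ H ((mixedOp f g) ∘ₗ (mixedOp f g)) := by
  rw [comp_mixedOp, trace_mixedOp]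
  rw [mixedFP]
  congr 1
  funext m
  show _ = ⟪g m, ∑ n, (⟪g n, f m⟫) • f n⟫
  rw [inner_sum]
  simp [inner_smul_right, mul_comm]

/-- if all eigenvalues of `TU⋆` (roots of its characteristic polynomial) are
real, then `FP(f,g)` and `∑ α m` are real, and `FP(f,g) ≥ (1/d) (∑ α m)²`. -/
theorem mixedFP_lower_bound_of_real_eigenvalues {N : ℕ} (hd : 1 ≤ Module.finrank ℂ H)
    (α : Fin N → ℂ) (f g : Fin N → H) (hS : ∀ m, ⟪g m, f m⟫ = α m)
    (hroots : ∀ z ∈ (LinearMap.charpoly (mixedOp f g)).roots, z.im = 0) :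
    (mixedFP f g).im = 0 ∧ (∑ m, α m).im = 0 ∧
    (1 / (Module.finrank ℂ H : ℝ)) * ((∑ m, α m).re) ^ 2 ≤ (mixedFP f g).re := by
  classical
  set T := mixedOp f g with hT
  set b := (stdOrthonormalBasis ℂ H).toBasis with hb
  set A := LinearMap.toMatrix b b T with hA
  set R := (LinearMap.charpoly T).roots with hRdef
  have hchar : LinearMap.charpoly T = A.charpoly := (LinearMap.charpoly_toMatrix T b).symm
  -- trace identities
  have hsum : ∑ m, α m = R.sum := by
    have h0 : ∑ m, α m = LinearMap.trace ℂ H T := by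
      rw [hT, trace_mixedOp]
      exact Finset.sum_congr rfl fun m _ => (hS m).symm
    rw [h0, LinearMap.trace_eq_matrix_trace ℂ b, ← hA, hRdef, hchar]
    exact A.trace_eq_sum_roots_charpoly
  have hFP : mixedFP f g = (R.map (fun l => l ^ 2)).sum := by
    rw [mixedFP_eq_trace, ← hT, LinearMap.trace_eq_matrix_trace ℂ b,
      LinearMap.toMatrix_comp b b b, ← hA, hRdef, hchar]
    exact trace_sq_eq' A
  -- cardinality of the root multiset
  have hcard : (Multiset.card R : ℝ) = (Module.finrank ℂ H : ℝ) := by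
    have hsp := IsAlgClosed.splits A.charpoly
    rw [hRdef, hchar, Polynomial.splits_iff_card_roots.mp hsp,
      Matrix.charpoly_natDegree_eq_dim]
    simp
  -- real parts
  have hsum_im : R.sum.im = 0 := by
    have h := map_multiset_sum Complex.imAddGroupHom R
    simp only [Complex.coe_imAddGroupHom] at h
    rw [h]
    apply Multiset.sum_eq_zero
    intro x hx
    obtain ⟨z, hz, rfl⟩ := Multiset.mem_map.mp hx
    exact hroots z hz
  have hsq_im : (R.map (fun l => l ^ 2)).sum.im = 0 := by
    have h := map_multiset_sum Complex.imAddGroupHom (R.map (fun l => l ^ 2))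
    simp only [Complex.coe_imAddGroupHom] at h
    rw [h]
    apply Multiset.sum_eq_zero
    intro x hx
    obtain ⟨y, hy, rfl⟩ := Multiset.mem_map.mp hx
    obtain ⟨z, hz, rfl⟩ := Multiset.mem_map.mp hy
    show (z ^ 2).im = 0
    simp [pow_two, Complex.mul_im, hroots z hz]
  have hre : R.sum.re = (R.map Complex.re).sum := by
    have h := map_multiset_sum Complex.reAddGroupHom R
    exact h
  have hsq_re : (R.map (fun l => l ^ 2)).sum.re = ((R.map Complex.re).map (fun r => r ^ 2)).sum := by
    have h := map_multiset_sum Complex.reAddGroupHom (R.map (fun l => l ^ 2))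
    simp only [Complex.coe_reAddGroupHom] at h
    rw [h, Multiset.map_map, Multiset.map_map]
    apply congrArg
    apply Multiset.map_congr rfl
    intro z hz
    show ((fun x : ℂ => x.re) ∘ (fun l : ℂ => l ^ 2)) z = ((fun r : ℝ => r ^ 2) ∘ Complex.re) z
    simp [Function.comp, pow_two, Complex.mul_re, hroots z hz]
  refine ⟨by rw [hFP]; exact hsq_im, by rw [hsum]; exact hsum_im, ?_⟩
  rw [hFP, hsum, hsq_re, hre]
  have hCS := multiset_sq_sum_le (R.map Complex.re)
  rw [Multiset.card_map, hcard] at hCS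
  have hdpos : (0:ℝ) < (Module.finrank ℂ H : ℝ) := by exact_mod_cast hd
  rw [div_mul_eq_mul_div, one_mul, div_le_iff₀ hdpos]
  linarith [hCS]
end

section
/- Let α = (α_1,…,α_N) ∈ ℂ^N and let (f,g) ∈ S̃(α). If the mixed frame operator TU* has only one eigenvalue, i.e. its characteristic polynomial equals (X − λ)^d for some λ ∈ ℂ, then FP(f,g) = (1/d)·(∑_{m=1}^N α_m)². In particular this holds when TU* = (1/d)(∑_{m=1}^N α_m)·Id. -/
open scoped ComplexInnerProductSpace

/- `H` is a complex inner product space of finite dimension `d = Module.finrank ℂ H`.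
The paper's inner product `⟨x, y⟩` is linear in the first argument, hence it corresponds to
Mathlib's `⟪y, x⟫ = inner y x` (Mathlib's inner product is linear in the second argument). -/
variable {H : Type*} [NormedAddCommGroup H] [InnerProductSpace ℂ H] [FiniteDimensional ℂ H]

lemma trace_rankOne_aux {H : Type*} [NormedAddCommGroup H] [InnerProductSpace ℂ H]
    [FiniteDimensional ℂ H] (φ : H →ₗ[ℂ] ℂ) (v : H) :
    LinearMap.trace ℂ H (LinearMap.smulRight φ v) = φ v := by
  have h1 : LinearMap.smulRight φ v = (LinearMap.toSpanSingleton ℂ H v).comp φ := by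
    ext x; simp [LinearMap.toSpanSingleton_apply]
  rw [h1, LinearMap.trace_comp_comm']
  have h2 : φ.comp (LinearMap.toSpanSingleton ℂ H v) = (φ v) • LinearMap.id := by
    ext c
    simp [LinearMap.toSpanSingleton_apply, mul_comm]
  rw [h2, LinearMap.map_smul, LinearMap.trace_id]
  simp


lemma mixedOp_eq_sum_aux {H : Type*} [NormedAddCommGroup H] [InnerProductSpace ℂ H]
    [FiniteDimensional ℂ H] {N : ℕ} (f g : Fin N → H) :
    mixedOp f g = ∑ m, LinearMap.smulRight ((innerSL ℂ (g m)) : H →ₗ[ℂ] ℂ) (f m) := by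
  ext x
  simp [mixedOp, LinearMap.sum_apply]

lemma trace_mixedOp_comp_aux {H : Type*} [NormedAddCommGroup H] [InnerProductSpace ℂ H]
    [FiniteDimensional ℂ H] {N : ℕ} (f g : Fin N → H) (A : H →ₗ[ℂ] H) :
    LinearMap.trace ℂ H ((mixedOp f g).comp A) = ∑ m, ⟪g m, A (f m)⟫ := by
  rw [mixedOp_eq_sum_aux]
  have : (∑ m, LinearMap.smulRight ((innerSL ℂ (g m)) : H →ₗ[ℂ] ℂ) (f m)).comp A
      = ∑ m, LinearMap.smulRight (((innerSL ℂ (g m)) : H →ₗ[ℂ] ℂ).comp A) (f m) := by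
    ext x; simp [LinearMap.sum_apply]
  rw [this, map_sum]
  simp [trace_rankOne_aux]

lemma trace_mixedOp_aux {H : Type*} [NormedAddCommGroup H] [InnerProductSpace ℂ H]
    [FiniteDimensional ℂ H] {N : ℕ} (f g : Fin N → H) :
    LinearMap.trace ℂ H (mixedOp f g) = ∑ m, ⟪g m, f m⟫ := by
  rw [mixedOp_eq_sum_aux, map_sum]
  simp [trace_rankOne_aux]

lemma trace_mixedOp_sq_aux {H : Type*} [NormedAddCommGroup H] [InnerProductSpace ℂ H]
    [FiniteDimensional ℂ H] {N : ℕ} (f g : Fin N → H) :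
    LinearMap.trace ℂ H ((mixedOp f g).comp (mixedOp f g)) = mixedFP f g := by
  rw [trace_mixedOp_comp_aux, mixedFP]
  refine Finset.sum_congr rfl fun m _ => ?_
  have : (mixedOp f g) (f m) = ∑ n, (⟪g n, f m⟫) • f n := rfl
  rw [this, inner_sum]
  refine Finset.sum_congr rfl fun n _ => ?_
  rw [inner_smul_right]

open Polynomial in
/-- if `TU⋆` has only one eigenvalue, i.e. its characteristic polynomial is
`(X - λ)^d`, then `FP(f,g) = (1/d) (∑ α m)²`; in particular this holds when
`TU⋆ = ((1/d) ∑ α m) • Id`. -/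
theorem mixedFP_of_single_eigenvalue {N : ℕ} (hd : 1 ≤ Module.finrank ℂ H)
    (α : Fin N → ℂ) (f g : Fin N → H) (hS : ∀ m, ⟪g m, f m⟫ = α m) :
    ((∃ lam : ℂ, LinearMap.charpoly (mixedOp f g)
        = (X - C lam) ^ (Module.finrank ℂ H)) →
      mixedFP f g = (1 / (Module.finrank ℂ H : ℂ)) * (∑ m, α m) ^ 2) ∧
    ((mixedOp f g = ((1 / (Module.finrank ℂ H : ℂ)) * ∑ m, α m) • LinearMap.id) →
      mixedFP f g = (1 / (Module.finrank ℂ H : ℂ)) * (∑ m, α m) ^ 2) := by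
  set d := Module.finrank ℂ H with hdd
  have hd0 : (d : ℂ) ≠ 0 := Nat.cast_ne_zero.mpr (by omega)
  have htr : LinearMap.trace ℂ H (mixedOp f g) = ∑ m, α m := by
    rw [trace_mixedOp_aux]; exact Finset.sum_congr rfl fun m _ => hS m
  constructor
  · rintro ⟨lam, hcp⟩
    set A : Module.End ℂ H := mixedOp f g with hA
    have hch := LinearMap.aeval_self_charpoly A
    rw [hcp] at hch
    have hN0 : (A - algebraMap ℂ (Module.End ℂ H) lam) ^ d = 0 := by
      simpa [map_pow, map_sub, Polynomial.aeval_X, Polynomial.aeval_C] using hch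
    set Nn : Module.End ℂ H := A - algebraMap ℂ (Module.End ℂ H) lam with hNn
    have hNnil : IsNilpotent Nn := ⟨d, hN0⟩
    have htrN : LinearMap.trace ℂ H Nn = 0 :=
      (LinearMap.isNilpotent_trace_of_isNilpotent hNnil).eq_zero
    have htrN2 : LinearMap.trace ℂ H (Nn * Nn) = 0 := by
      refine (LinearMap.isNilpotent_trace_of_isNilpotent ?_).eq_zero
      exact ⟨d, by rw [← pow_two, ← pow_mul, mul_comm, pow_mul, hN0, zero_pow (by omega)]⟩
    have halg : algebraMap ℂ (Module.End ℂ H) lam = lam • (1 : Module.End ℂ H) :=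
      Algebra.algebraMap_eq_smul_one lam
    have hAsum : A = Nn + lam • (1 : Module.End ℂ H) := by
      rw [hNn, halg]; abel
    have htrA : LinearMap.trace ℂ H A = lam * d := by
      rw [hAsum, map_add, map_smul, LinearMap.trace_one, htrN]
      simp [mul_comm]
      exact Or.inl hdd.symm
    have hsum : ∑ m, α m = lam * d := by rw [← htr, htrA]
    have hsq : A * A = Nn * Nn + lam • Nn + lam • Nn + (lam * lam) • (1 : Module.End ℂ H) := by
      rw [hAsum]
      simp only [mul_add, add_mul, smul_mul_assoc, mul_smul_comm, one_mul, mul_one, smul_smul, smul_add]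
      abel
    have htrA2 : LinearMap.trace ℂ H (A * A) = lam * lam * d := by
      rw [hsq]
      simp only [map_add, map_smul, htrN2, htrN, LinearMap.trace_one, smul_eq_mul]
      ring
    have hfp : mixedFP f g = lam * lam * d := by
      rw [← trace_mixedOp_sq_aux, ← htrA2]
      congr 1
    rw [hfp, hsum]
    field_simp
  · intro h
    set c : ℂ := (1 / (d : ℂ)) * ∑ m, α m with hc
    have hcomp : (mixedOp f g).comp (mixedOp f g) = (c * c) • (LinearMap.id : H →ₗ[ℂ] H) := by
      rw [h]
      ext x
      simp [mul_smul]
    have : mixedFP f g = c * c * d := by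
      rw [← trace_mixedOp_sq_aux, hcomp, map_smul, LinearMap.trace_id]
      simp [mul_comm]
      exact Or.inl hdd.symm
    rw [this, hc]
    field_simp
end

section
/- Let α = (α_1,…,α_N) ∈ ℂ^N. If (f,g) ∈ S̃(α) is a local extremum (local minimum or local maximum) on the set S̃(α) of the real part of the mixed frame potential FP, or a local extremum on S̃(α) of the imaginary part of FP, then for each m ∈ {1,…,N} there exists c ∈ ℂ such that ∑_{n≠m} ⟨f_m, g_n⟩ f_n = c·f_m and ∑_{n≠m} ⟨g_m, f_n⟩ g_n = conj(c)·g_m. -/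
open scoped ComplexInnerProductSpace

/- `H` is a complex inner product space of finite dimension `d = Module.finrank ℂ H`.
The paper's inner product `⟨x, y⟩` is linear in the first argument, hence it corresponds to
Mathlib's `⟪y, x⟫ = inner y x` (Mathlib's inner product is linear in the second argument). -/
variable {H : Type*} [NormedAddCommGroup H] [InnerProductSpace ℂ H] [FiniteDimensional ℂ H]

set_option linter.unusedSectionVars false
set_option linter.unusedVariables false

lemma sum_split {N : ℕ} (m : Fin N) (T : Fin N → Fin N → ℂ) :
    ∑ i, ∑ j, T i j = T m m + ∑ j ∈ Finset.univ.erase m, T m j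
      + ∑ i ∈ Finset.univ.erase m, T i m
      + ∑ i ∈ Finset.univ.erase m, ∑ j ∈ Finset.univ.erase m, T i j := by
  rw [← Finset.add_sum_erase _ (fun i => ∑ j, T i j) (Finset.mem_univ m),
      ← Finset.add_sum_erase _ (fun j => T m j) (Finset.mem_univ m)]
  have h : ∀ i, ∑ j, T i j = T i m + ∑ j ∈ Finset.univ.erase m, T i j := fun i =>
    (Finset.add_sum_erase _ _ (Finset.mem_univ m)).symm
  rw [Finset.sum_congr rfl (fun i _ => h i), Finset.sum_add_distrib]
  ring

lemma sum_lin {ι : Type*} (s : Finset ι) (A B C : ι → ℂ) (t : ℂ) :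
    ∑ j ∈ s, (A j + t * B j + t^2 * C j)
      = ∑ j ∈ s, A j + t * ∑ j ∈ s, B j + t^2 * ∑ j ∈ s, C j := by
  simp [Finset.sum_add_distrib, Finset.mul_sum]

lemma curve_fp {N : ℕ} (f g : Fin N → H) (m : Fin N) (v w : H)
    (hc1 : ⟪g m, v⟫ + ⟪w, f m⟫ = 0) (hc2 : ⟪w, v⟫ = 0) (t : ℝ) :
    mixedFP (Function.update f m (f m + (t:ℂ) • v)) (Function.update g m (g m + (t:ℂ) • w))
      = mixedFP f g
        + (t:ℂ) * (2 * ∑ j ∈ Finset.univ.erase m, (⟪g m, f j⟫ * ⟪g j, v⟫ + ⟪g j, f m⟫ * ⟪w, f j⟫))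
        + (t:ℂ)^2 * (2 * ∑ j ∈ Finset.univ.erase m, ⟪g j, v⟫ * ⟪w, f j⟫) := by
  set F := Function.update f m (f m + (t:ℂ) • v) with hF
  set G := Function.update g m (g m + (t:ℂ) • w) with hG
  have hFm : F m = f m + (t:ℂ) • v := Function.update_self _ _ _
  have hGm : G m = g m + (t:ℂ) • w := Function.update_self _ _ _
  have hFj : ∀ j, j ≠ m → F j = f j := fun j hj => Function.update_of_ne hj _ _
  have hGj : ∀ j, j ≠ m → G j = g j := fun j hj => Function.update_of_ne hj _ _
  have hmm : ⟪G m, F m⟫ = ⟪g m, f m⟫ := by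
    rw [hFm, hGm]
    simp only [inner_add_left, inner_add_right, inner_smul_left, inner_smul_right,
      Complex.conj_ofReal]
    linear_combination (t:ℂ) * hc1 + (t:ℂ)^2 * hc2
  unfold mixedFP
  rw [sum_split m (fun i j => ⟪G j, F i⟫ * ⟪G i, F j⟫),
      sum_split m (fun i j => ⟪g j, f i⟫ * ⟪g i, f j⟫)]
  have hcross : ∀ j ∈ Finset.univ.erase m,
      ⟪G j, F m⟫ * ⟪G m, F j⟫ = ⟪g j, f m⟫ * ⟪g m, f j⟫
        + (t:ℂ) * (⟪g m, f j⟫ * ⟪g j, v⟫ + ⟪g j, f m⟫ * ⟪w, f j⟫)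
        + (t:ℂ)^2 * (⟪g j, v⟫ * ⟪w, f j⟫) := by
    intro j hj
    have hjm : j ≠ m := Finset.ne_of_mem_erase hj
    rw [hFm, hGm, hFj j hjm, hGj j hjm]
    simp only [inner_add_left, inner_add_right, inner_smul_left, inner_smul_right,
      Complex.conj_ofReal]
    ring
  have hcross' : ∀ j ∈ Finset.univ.erase m,
      ⟪G m, F j⟫ * ⟪G j, F m⟫ = ⟪g j, f m⟫ * ⟪g m, f j⟫
        + (t:ℂ) * (⟪g m, f j⟫ * ⟪g j, v⟫ + ⟪g j, f m⟫ * ⟪w, f j⟫)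
        + (t:ℂ)^2 * (⟪g j, v⟫ * ⟪w, f j⟫) := by
    intro j hj
    rw [mul_comm]; exact hcross j hj
  have hoff : ∀ i ∈ Finset.univ.erase m, ∀ j ∈ Finset.univ.erase m,
      ⟪G j, F i⟫ * ⟪G i, F j⟫ = ⟪g j, f i⟫ * ⟪g i, f j⟫ := by
    intro i hi j hj
    rw [hFj i (Finset.ne_of_mem_erase hi), hGj i (Finset.ne_of_mem_erase hi),
        hFj j (Finset.ne_of_mem_erase hj), hGj j (Finset.ne_of_mem_erase hj)]
  have hcomm : ∑ i ∈ Finset.univ.erase m, ⟪g m, f i⟫ * ⟪g i, f m⟫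
      = ∑ i ∈ Finset.univ.erase m, ⟪g i, f m⟫ * ⟪g m, f i⟫ :=
    Finset.sum_congr rfl (fun i _ => mul_comm _ _)
  rw [Finset.sum_congr rfl hcross, Finset.sum_congr rfl hcross',
      Finset.sum_congr rfl (fun i hi => Finset.sum_congr rfl (hoff i hi)), hmm,
      sum_lin, hcomm]
  ring

set_option linter.unusedSectionVars false

lemma curve_mem {N : ℕ} (α : Fin N → ℂ) (f g : Fin N → H) (hS : ∀ i, ⟪g i, f i⟫ = α i)
    (m : Fin N) (v w : H) (hc1 : ⟪g m, v⟫ + ⟪w, f m⟫ = 0) (hc2 : ⟪w, v⟫ = 0) (t : ℝ) (i : Fin N) :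
    ⟪Function.update g m (g m + (t:ℂ) • w) i, Function.update f m (f m + (t:ℂ) • v) i⟫ = α i := by
  rcases eq_or_ne i m with rfl | hi
  · rw [Function.update_self, Function.update_self]
    simp only [inner_add_left, inner_add_right, inner_smul_left, inner_smul_right,
      Complex.conj_ofReal]
    rw [hS i]
    linear_combination (t:ℂ) * hc1 + (t:ℂ)^2 * hc2
  · rw [Function.update_of_ne hi, Function.update_of_ne hi, hS i]

lemma deriv_coeff_zero {N : ℕ} (α : Fin N → ℂ) (f g : Fin N → H) (hS : ∀ i, ⟪g i, f i⟫ = α i)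
    (ρ : ℂ →ₗ[ℝ] ℝ)
    (hext : IsLocalExtrOn (fun p : (Fin N → H) × (Fin N → H) => ρ (mixedFP p.1 p.2))
      {p : (Fin N → H) × (Fin N → H) | ∀ i, ⟪p.2 i, p.1 i⟫ = α i} (f, g))
    (m : Fin N) (v w : H) (hc1 : ⟪g m, v⟫ + ⟪w, f m⟫ = 0) (hc2 : ⟪w, v⟫ = 0) :
    ρ (2 * ∑ j ∈ Finset.univ.erase m, (⟪g m, f j⟫ * ⟪g j, v⟫ + ⟪g j, f m⟫ * ⟪w, f j⟫)) = 0 := by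
  classical
  set b : ℂ := 2 * ∑ j ∈ Finset.univ.erase m, (⟪g m, f j⟫ * ⟪g j, v⟫ + ⟪g j, f m⟫ * ⟪w, f j⟫)
    with hb
  set q : ℂ := 2 * ∑ j ∈ Finset.univ.erase m, ⟪g j, v⟫ * ⟪w, f j⟫ with hq
  set p : ℝ → (Fin N → H) × (Fin N → H) := fun t =>
    (Function.update f m (f m + (t:ℂ) • v), Function.update g m (g m + (t:ℂ) • w)) with hp
  have hp0 : p 0 = (f, g) := by
    simp [hp, Function.update_eq_self]
  have hpc : Continuous p := by
    refine Continuous.prodMk ?_ ?_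
    · exact continuous_const.update m
        (continuous_const.add ((Complex.continuous_ofReal).smul continuous_const))
    · exact continuous_const.update m
        (continuous_const.add ((Complex.continuous_ofReal).smul continuous_const))
  have hmem : ∀ t : ℝ, p t ∈ {p : (Fin N → H) × (Fin N → H) | ∀ i, ⟪p.2 i, p.1 i⟫ = α i} :=
    fun t i => curve_mem α f g hS m v w hc1 hc2 t i
  have htend : Filter.Tendsto p (nhds 0)
      (nhdsWithin (f, g) {p : (Fin N → H) × (Fin N → H) | ∀ i, ⟪p.2 i, p.1 i⟫ = α i}) := by
    rw [tendsto_nhdsWithin_iff]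
    constructor
    · have := hpc.continuousAt (x := (0:ℝ))
      rwa [ContinuousAt, hp0] at this
    · exact Filter.Eventually.of_forall hmem
  have hextr : IsLocalExtr (fun t : ℝ => ρ (mixedFP (p t).1 (p t).2)) 0 := by
    have hf : IsExtrFilter (fun pr : (Fin N → H) × (Fin N → H) => ρ (mixedFP pr.1 pr.2))
        (nhdsWithin (f, g) {p : (Fin N → H) × (Fin N → H) | ∀ i, ⟪p.2 i, p.1 i⟫ = α i})
        (p 0) := by rw [hp0]; exact hext
    exact hf.comp_tendsto htend
  have heq : (fun t : ℝ => ρ (mixedFP (p t).1 (p t).2))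
      = fun t : ℝ => ρ (mixedFP f g) + t * ρ b + t^2 * ρ q := by
    funext t
    have := curve_fp f g m v w hc1 hc2 t
    simp only [hp]
    rw [this]
    have h1 : (t:ℂ) * b = (t : ℝ) • b := by rw [Complex.real_smul]
    have h2 : (t:ℂ)^2 * q = ((t^2 : ℝ)) • q := by rw [Complex.real_smul]; push_cast; ring
    rw [h1, h2, map_add, map_add, map_smul, map_smul]
    simp [smul_eq_mul]
  rw [heq] at hextr
  have hderiv : HasDerivAt (fun t : ℝ => ρ (mixedFP f g) + t * ρ b + t^2 * ρ q) (ρ b) 0 := by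
    have h1 : HasDerivAt (fun t : ℝ => t * ρ b) (ρ b) 0 := by
      simpa using (hasDerivAt_id (0:ℝ)).mul_const (ρ b)
    have h2 : HasDerivAt (fun t : ℝ => t^2 * ρ q) 0 0 := by
      simpa using (hasDerivAt_pow 2 (0:ℝ)).mul_const (ρ q)
    have h3 := (h1.const_add (ρ (mixedFP f g))).add h2
    rw [add_zero] at h3
    exact h3
  have := hextr.deriv_eq_zero
  rwa [hderiv.deriv] at this

lemma inner_self_ofReal (x : H) : ⟪x, x⟫ = ((‖x‖ : ℂ))^2 := by
  rw [inner_self_eq_norm_sq_to_K]; norm_cast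

lemma exists_smul_of_orth (x y : H) (h : ∀ u : H, ⟪y, u⟫ = 0 → ⟪x, u⟫ = 0) :
    ∃ c : ℂ, x = c • y := by
  by_cases hy : y = 0
  · refine ⟨0, ?_⟩
    have hx : ⟪x, x⟫ = 0 := h x (by simp [hy])
    have := inner_self_eq_zero.mp hx
    simp [this]
  · set c : ℂ := ⟪y, x⟫ / ((‖y‖ : ℂ)^2) with hc
    refine ⟨c, ?_⟩
    have hnz : ((‖y‖ : ℂ)^2) ≠ 0 :=
      pow_ne_zero 2 (Complex.ofReal_ne_zero.mpr (norm_ne_zero_iff.mpr hy))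
    have hyv : ⟪y, x - c • y⟫ = 0 := by
      rw [inner_sub_right, inner_smul_right, inner_self_eq_norm_sq_to_K, hc]
      field_simp
      simp [hy]
    have hxv : ⟪x, x - c • y⟫ = 0 := h _ hyv
    have hv : ⟪x - c • y, x - c • y⟫ = 0 := by
      rw [inner_sub_left, hxv, inner_smul_left, hyv, mul_zero, sub_zero]
    exact sub_eq_zero.mp (inner_self_eq_zero.mp hv)

/-- if `(f,g) ∈ S̃(α)` is a local extremum on `S̃(α)` of the real part of the
mixed frame potential, or a local extremum on `S̃(α)` of its imaginary part, then for each
`m` there is `c ∈ ℂ` with `∑_{n ≠ m} ⟨f m, g n⟩ f n = c • f m` and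
`∑_{n ≠ m} ⟨g m, f n⟩ g n = conj c • g m` (paper convention for the inner products). -/
theorem lagrange_equations_of_local_extr {N : ℕ} (hd : 1 ≤ Module.finrank ℂ H)
    (α : Fin N → ℂ) (f g : Fin N → H) (hS : ∀ m, ⟪g m, f m⟫ = α m)
    (hext :
      IsLocalExtrOn (fun p : (Fin N → H) × (Fin N → H) => (mixedFP p.1 p.2).re)
        {p : (Fin N → H) × (Fin N → H) | ∀ m, ⟪p.2 m, p.1 m⟫ = α m} (f, g) ∨
      IsLocalExtrOn (fun p : (Fin N → H) × (Fin N → H) => (mixedFP p.1 p.2).im)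
        {p : (Fin N → H) × (Fin N → H) | ∀ m, ⟪p.2 m, p.1 m⟫ = α m} (f, g)) :
    ∀ m : Fin N, ∃ c : ℂ,
      ∑ n ∈ Finset.univ.erase m, (⟪g n, f m⟫) • f n = c • f m ∧
      ∑ n ∈ Finset.univ.erase m, (⟪f n, g m⟫) • g n = (starRingEnd ℂ c) • g m := by
  classical
  intro m
  set A : H := ∑ n ∈ Finset.univ.erase m, (⟪g n, f m⟫) • f n with hAdef
  set B : H := ∑ n ∈ Finset.univ.erase m, (⟪f n, g m⟫) • g n with hBdef
  have hsum : ∀ v w : H,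
      ∑ j ∈ Finset.univ.erase m, (⟪g m, f j⟫ * ⟪g j, v⟫ + ⟪g j, f m⟫ * ⟪w, f j⟫)
        = ⟪B, v⟫ + ⟪w, A⟫ := by
    intro v w
    rw [Finset.sum_add_distrib, hBdef, hAdef, sum_inner, inner_sum]
    congr 1
    · exact Finset.sum_congr rfl fun j _ => by rw [inner_smul_left, inner_conj_symm]
    · exact Finset.sum_congr rfl fun j _ => by rw [inner_smul_right]
  obtain ⟨ρ, hρ, hex⟩ : ∃ ρ : ℂ →ₗ[ℝ] ℝ,
      (∀ u : ℂ, ρ u = 0 → ρ (Complex.I * u) = 0 → u = 0) ∧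
      IsLocalExtrOn (fun p : (Fin N → H) × (Fin N → H) => ρ (mixedFP p.1 p.2))
        {p : (Fin N → H) × (Fin N → H) | ∀ i, ⟪p.2 i, p.1 i⟫ = α i} (f, g) := by
    rcases hext with h | h
    · refine ⟨Complex.reLm, fun u h1 h2 => ?_, h⟩
      simp only [Complex.reLm_coe, Complex.mul_re, Complex.I_re, Complex.I_im] at h1 h2
      exact Complex.ext_iff.mpr ⟨by simpa using h1, by simp only [Complex.zero_im]; linarith⟩
    · refine ⟨Complex.imLm, fun u h1 h2 => ?_, h⟩
      simp only [Complex.imLm_coe, Complex.mul_im, Complex.I_re, Complex.I_im] at h1 h2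
      exact Complex.ext_iff.mpr ⟨by simp only [Complex.zero_re]; linarith, by simpa using h1⟩
  have key : ∀ v w : H, ⟪g m, v⟫ + ⟪w, f m⟫ = 0 → ⟪w, v⟫ = 0 → ⟪B, v⟫ + ⟪w, A⟫ = 0 := by
    intro v w h1 h2
    have k1 := deriv_coeff_zero α f g hS ρ hex m v w h1 h2
    rw [hsum v w] at k1
    have h1' : ⟪g m, Complex.I • v⟫ + ⟪(-Complex.I) • w, f m⟫ = 0 := by
      rw [inner_smul_right, inner_smul_left]
      simp only [map_neg, Complex.conj_I, neg_neg]
      linear_combination Complex.I * h1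
    have h2' : ⟪(-Complex.I) • w, Complex.I • v⟫ = 0 := by
      rw [inner_smul_left, inner_smul_right, h2]; ring
    have k2 := deriv_coeff_zero α f g hS ρ hex m (Complex.I • v) ((-Complex.I) • w) h1' h2'
    rw [hsum] at k2
    have hIz : ⟪B, Complex.I • v⟫ + ⟪(-Complex.I) • w, A⟫
        = Complex.I * (⟪B, v⟫ + ⟪w, A⟫) := by
      rw [inner_smul_right, inner_smul_left]
      simp only [map_neg, Complex.conj_I, neg_neg]
      ring
    rw [hIz, show (2:ℂ) * (Complex.I * (⟪B, v⟫ + ⟪w, A⟫))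
        = Complex.I * (2 * (⟪B, v⟫ + ⟪w, A⟫)) by ring] at k2
    have h0 := hρ _ k1 k2
    linear_combination h0 / 2
  have hBv : ∀ u : H, ⟪g m, u⟫ = 0 → ⟪B, u⟫ = 0 := by
    intro u hu
    have := key u 0 (by simp [hu]) (by simp)
    simpa using this
  obtain ⟨c2, hc2⟩ := exists_smul_of_orth B (g m) hBv
  have hAv : ∀ u : H, ⟪f m, u⟫ = 0 → ⟪A, u⟫ = 0 := by
    intro u hu
    have hu' : ⟪u, f m⟫ = 0 := by rw [← inner_conj_symm, hu, map_zero]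
    have h3 : ⟪u, A⟫ = 0 := by simpa using key 0 u (by simp [hu']) (by simp)
    rw [← inner_conj_symm, h3, map_zero]
  obtain ⟨c1, hc1⟩ := exists_smul_of_orth A (f m) hAv
  have hlink : c1 * α m = (starRingEnd ℂ) c2 * α m := by
    have e1 : ⟪g m, A⟫ = c1 * α m := by rw [hc1, inner_smul_right, hS m]
    have e2 : ⟪B, f m⟫ = (starRingEnd ℂ) c2 * α m := by rw [hc2, inner_smul_left, hS m]
    have e3 : ⟪g m, A⟫ = ⟪B, f m⟫ := by
      rw [hAdef, hBdef, inner_sum, sum_inner]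
      exact Finset.sum_congr rfl fun j _ => by
        rw [inner_smul_right, inner_smul_left, inner_conj_symm]; ring
    rw [← e1, ← e2, e3]
  by_cases hα : α m = 0
  · by_cases hf0 : f m = 0
    · refine ⟨(starRingEnd ℂ) c2, ?_, ?_⟩
      · rw [hc1, hf0]; simp
      · rw [hc2, Complex.conj_conj]
    · by_cases hg0 : g m = 0
      · refine ⟨c1, hc1, ?_⟩
        rw [hc2, hg0]; simp
      · -- special perturbation: v = g m, w = r • f m
        have hfn : (‖f m‖ : ℂ) ≠ 0 := Complex.ofReal_ne_zero.mpr (norm_ne_zero_iff.mpr hf0)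
        have hgn : (‖g m‖ : ℂ) ≠ 0 := Complex.ofReal_ne_zero.mpr (norm_ne_zero_iff.mpr hg0)
        set r : ℂ := -((‖g m‖ : ℂ)^2 / (‖f m‖ : ℂ)^2) with hr
        have hrconj : (starRingEnd ℂ) r = r := by
          rw [hr, map_neg, map_div₀, map_pow, map_pow, Complex.conj_ofReal,
            Complex.conj_ofReal]
        have hfg : ⟪f m, g m⟫ = 0 := by
          rw [← inner_conj_symm, hS m, hα, map_zero]
        have h1 : ⟪g m, g m⟫ + ⟪r • f m, f m⟫ = 0 := by
          rw [inner_smul_left, hrconj, inner_self_ofReal, inner_self_ofReal, hr]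
          field_simp
          ring
        have h2 : ⟪r • f m, g m⟫ = 0 := by
          rw [inner_smul_left, hfg, mul_zero]
        have hk := key (g m) (r • f m) h1 h2
        rw [hc1, hc2, inner_smul_left, inner_smul_left, inner_smul_right,
          inner_self_ofReal, inner_self_ofReal, hrconj] at hk
        -- hk : conj c2 * ‖g‖^2 + r * (c1 * ‖f‖^2) = 0
        have hc12 : c1 = (starRingEnd ℂ) c2 := by
          have hng2 : ((‖g m‖ : ℂ))^2 ≠ 0 := pow_ne_zero 2 hgn
          have hrmul : r * (c1 * (‖f m‖ : ℂ)^2) = -((‖g m‖ : ℂ)^2 * c1) := by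
            rw [hr]; field_simp
          have hz : ((starRingEnd ℂ) c2 - c1) * (‖g m‖ : ℂ)^2 = 0 := by
            linear_combination hk - hrmul
          rcases mul_eq_zero.mp hz with h | h
          · exact (sub_eq_zero.mp h).symm
          · exact absurd h hng2
        refine ⟨c1, hc1, ?_⟩
        rw [hc2, hc12, Complex.conj_conj]
  · have hc12 : c1 = (starRingEnd ℂ) c2 := mul_right_cancel₀ hα hlink
    refine ⟨c1, hc1, ?_⟩
    rw [hc2, hc12, Complex.conj_conj]
end

section
/- Let α = (α_1,…,α_N) ∈ ℂ^N and let (f,g) ∈ S̃(α) be a critical pair of sequences. Then for each m ∈ {1,…,N} there exists μ ∈ ℂ such that TU*(f_m) = μ·f_m and UT*(g_m) = conj(μ)·g_m; explicitly, if c ∈ ℂ witnesses the critical-pair equations at index m, then TU*(f_m) = (α_m + c)·f_m and UT*(g_m) = conj(α_m + c)·g_m. -/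
open scoped ComplexInnerProductSpace

/- `H` is a complex inner product space of finite dimension `d = Module.finrank ℂ H`.
The paper's inner product `⟨x, y⟩` is linear in the first argument, hence it corresponds to
Mathlib's `⟪y, x⟫ = inner y x` (Mathlib's inner product is linear in the second argument). -/
variable {H : Type*} [NormedAddCommGroup H] [InnerProductSpace ℂ H] [FiniteDimensional ℂ H]

/-- if `(f,g) ∈ S̃(α)` is a critical pair of sequences, then each `f m` is an
eigenvector of `TU⋆` and each `g m` an eigenvector of `UT⋆` with conjugate eigenvalues;
explicitly, if `c` witnesses the critical-pair equations at `m`, the eigenvalues are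
`α m + c` and `conj (α m + c)`. -/
theorem critical_pair_eigenvectors {N : ℕ} (hd : 1 ≤ Module.finrank ℂ H)
    (α : Fin N → ℂ) (f g : Fin N → H) (hS : ∀ m, ⟪g m, f m⟫ = α m)
    (hcrit : ∀ m : Fin N, ∃ c : ℂ,
      ∑ n ∈ Finset.univ.erase m, (⟪g n, f m⟫) • f n = c • f m ∧
      ∑ n ∈ Finset.univ.erase m, (⟪f n, g m⟫) • g n = (starRingEnd ℂ c) • g m) :
    ∀ m : Fin N,
      (∃ μ : ℂ, mixedOp f g (f m) = μ • f m ∧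
        mixedOp g f (g m) = (starRingEnd ℂ μ) • g m) ∧
      (∀ c : ℂ,
        (∑ n ∈ Finset.univ.erase m, (⟪g n, f m⟫) • f n = c • f m ∧
         ∑ n ∈ Finset.univ.erase m, (⟪f n, g m⟫) • g n = (starRingEnd ℂ c) • g m) →
        mixedOp f g (f m) = (α m + c) • f m ∧
        mixedOp g f (g m) = (starRingEnd ℂ (α m + c)) • g m) := by
  intro m
  have key : ∀ c : ℂ,
      (∑ n ∈ Finset.univ.erase m, (⟪g n, f m⟫) • f n = c • f m ∧
       ∑ n ∈ Finset.univ.erase m, (⟪f n, g m⟫) • g n = (starRingEnd ℂ c) • g m) →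
      mixedOp f g (f m) = (α m + c) • f m ∧
      mixedOp g f (g m) = (starRingEnd ℂ (α m + c)) • g m := by
    intro c ⟨h1, h2⟩
    constructor
    · show ∑ n, (⟪g n, f m⟫) • f n = _
      rw [← Finset.add_sum_erase _ _ (Finset.mem_univ m), h1, hS m, add_smul]
    · show ∑ n, (⟪f n, g m⟫) • g n = _
      rw [← Finset.add_sum_erase _ _ (Finset.mem_univ m), h2, map_add, add_smul,
        ← inner_conj_symm, hS m]
  obtain ⟨c, hc⟩ := hcrit m
  exact ⟨⟨α m + c, key c hc⟩, key⟩
end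

section
/- Let α = (α_1,…,α_N) ∈ ℂ^N and let (f,g) ∈ S̃(α) be a critical pair of sequences. For λ ∈ ℂ define I_λ = {m ∈ {1,…,N} : TU*(f_m) = λ·f_m and UT*(g_m) = conj(λ)·g_m}. Then every index m ∈ {1,…,N} belongs to I_λ for some λ ∈ ℂ, and for every λ ∈ ℂ the families {f_m}_{m∈I_λ} and {g_m}_{m∈I_λ} are λ-generalized dual frames, i.e. ∑_{m∈I_λ} ⟨x, g_m⟩ f_m = λ·x for all x in span{f_m : m ∈ I_λ} and ∑_{m∈I_λ} ⟨x, f_m⟩ g_m = conj(λ)·x for all x in span{g_m : m ∈ I_λ}. -/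
open scoped ComplexInnerProductSpace

/- `H` is a complex inner product space of finite dimension `d = Module.finrank ℂ H`.
The paper's inner product `⟨x, y⟩` is linear in the first argument, hence it corresponds to
Mathlib's `⟪y, x⟫ = inner y x` (Mathlib's inner product is linear in the second argument). -/
variable {H : Type*} [NormedAddCommGroup H] [InnerProductSpace ℂ H] [FiniteDimensional ℂ H]

/-- `mixedOp g f` is the adjoint of `mixedOp f g`. -/
lemma mixedOp_adjoint_rel {N : ℕ} (f g : Fin N → H) (x y : H) :
    ⟪mixedOp g f y, x⟫ = ⟪y, mixedOp f g x⟫ := by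
  simp only [mixedOp, LinearMap.coe_mk, AddHom.coe_mk]
  rw [sum_inner, inner_sum]
  refine Finset.sum_congr rfl fun m _ => ?_
  rw [inner_smul_left, inner_smul_right, inner_conj_symm]
  ring

open Classical in
/-- for a critical pair `(f,g) ∈ S̃(α)`, every index belongs to some
`I_λ = {m : TU⋆ (f m) = λ • f m ∧ UT⋆ (g m) = conj λ • g m}`, and for every `λ ∈ ℂ`
the families `{f m}_{m ∈ I_λ}` and `{g m}_{m ∈ I_λ}` are `λ`-generalized dual frames. -/
theorem critical_pair_generalized_dual_frames {N : ℕ} (hd : 1 ≤ Module.finrank ℂ H)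
    (α : Fin N → ℂ) (f g : Fin N → H) (hS : ∀ m, ⟪g m, f m⟫ = α m)
    (hcrit : ∀ m : Fin N, ∃ c : ℂ,
      ∑ n ∈ Finset.univ.erase m, (⟪g n, f m⟫) • f n = c • f m ∧
      ∑ n ∈ Finset.univ.erase m, (⟪f n, g m⟫) • g n = (starRingEnd ℂ c) • g m) :
    (∀ m : Fin N, ∃ lam : ℂ,
      mixedOp f g (f m) = lam • f m ∧ mixedOp g f (g m) = (starRingEnd ℂ lam) • g m) ∧
    (∀ lam : ℂ,
      (∀ x ∈ Submodule.span ℂ (f '' {m | mixedOp f g (f m) = lam • f m ∧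
          mixedOp g f (g m) = (starRingEnd ℂ lam) • g m}),
        ∑ m ∈ Finset.univ.filter (fun m => mixedOp f g (f m) = lam • f m ∧
            mixedOp g f (g m) = (starRingEnd ℂ lam) • g m),
          (⟪g m, x⟫) • f m = lam • x) ∧
      (∀ x ∈ Submodule.span ℂ (g '' {m | mixedOp f g (f m) = lam • f m ∧
          mixedOp g f (g m) = (starRingEnd ℂ lam) • g m}),
        ∑ m ∈ Finset.univ.filter (fun m => mixedOp f g (f m) = lam • f m ∧
            mixedOp g f (g m) = (starRingEnd ℂ lam) • g m),
          (⟪f m, x⟫) • g m = (starRingEnd ℂ lam) • x)) := by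
  have part1 : ∀ m : Fin N, ∃ lam : ℂ,
      mixedOp f g (f m) = lam • f m ∧ mixedOp g f (g m) = (starRingEnd ℂ lam) • g m := by
    intro m
    obtain ⟨c, hc1, hc2⟩ := hcrit m
    refine ⟨c + α m, ?_, ?_⟩
    · show ∑ n, (⟪g n, f m⟫) • f n = _
      rw [← Finset.sum_erase_add _ _ (Finset.mem_univ m), hc1, hS m, add_smul]
    · have hfg : ⟪f m, g m⟫ = starRingEnd ℂ (α m) := by rw [← hS m, inner_conj_symm]
      show ∑ n, (⟪f n, g m⟫) • g n = _
      rw [← Finset.sum_erase_add _ _ (Finset.mem_univ m), hc2, hfg, map_add, add_smul]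
  refine ⟨part1, fun lam => ?_⟩
  set P : Fin N → Prop := fun m => mixedOp f g (f m) = lam • f m ∧
      mixedOp g f (g m) = (starRingEnd ℂ lam) • g m with hP
  have hkey : ∀ m : Fin N, ¬ P m → ∀ k : Fin N, P k →
      ⟪g m, f k⟫ = 0 ∧ ⟪f m, g k⟫ = 0 := by
    intro m hm k hk
    obtain ⟨μ, hμ1, hμ2⟩ := part1 m
    have hne : μ ≠ lam := fun h => hm ⟨h ▸ hμ1, h ▸ hμ2⟩
    constructor
    · have h1 := mixedOp_adjoint_rel f g (f k) (g m)
      rw [hk.1, hμ2, inner_smul_left, inner_smul_right, Complex.conj_conj] at h1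
      have h2 : (μ - lam) * ⟪g m, f k⟫ = 0 := by linear_combination h1
      exact (mul_eq_zero.mp h2).resolve_left (sub_ne_zero.mpr hne)
    · have h1 := mixedOp_adjoint_rel g f (g k) (f m)
      rw [hk.2, hμ1, inner_smul_left, inner_smul_right] at h1
      have h2 : (starRingEnd ℂ μ - starRingEnd ℂ lam) * ⟪f m, g k⟫ = 0 := by
        linear_combination h1
      refine (mul_eq_zero.mp h2).resolve_left (sub_ne_zero.mpr ?_)
      exact fun h => hne ((starRingEnd ℂ).injective h)
  have hsumf : ∀ k : Fin N, P k →
      ∑ m ∈ Finset.univ.filter P, (⟪g m, f k⟫) • f m = lam • f k := by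
    intro k hk
    rw [Finset.sum_filter_of_ne (fun m _ hne => by
      by_contra hPm
      exact hne (by rw [(hkey m hPm k hk).1, zero_smul]))]
    exact hk.1
  have hsumg : ∀ k : Fin N, P k →
      ∑ m ∈ Finset.univ.filter P, (⟪f m, g k⟫) • g m = (starRingEnd ℂ lam) • g k := by
    intro k hk
    rw [Finset.sum_filter_of_ne (fun m _ hne => by
      by_contra hPm
      exact hne (by rw [(hkey m hPm k hk).2, zero_smul]))]
    exact hk.2
  constructor
  · intro x hx
    induction hx using Submodule.span_induction with
    | mem x hx =>
      obtain ⟨k, hk, rfl⟩ := hx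
      exact hsumf k hk
    | zero => simp
    | add x y _ _ hx hy =>
      simp only [inner_add_right, add_smul, Finset.sum_add_distrib, hx, hy, smul_add]
    | smul c x _ hx =>
      simp only [inner_smul_right, mul_smul, ← Finset.smul_sum, hx, smul_comm c lam x]
  · intro x hx
    induction hx using Submodule.span_induction with
    | mem x hx =>
      obtain ⟨k, hk, rfl⟩ := hx
      exact hsumg k hk
    | zero => simp
    | add x y _ _ hx hy =>
      simp only [inner_add_right, add_smul, Finset.sum_add_distrib, hx, hy, smul_add]
    | smul c x _ hx =>
      simp only [inner_smul_right, mul_smul, ← Finset.smul_sum, hx,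
        smul_comm c (starRingEnd ℂ lam) x]
end

section
/- Let α = (α_1,…,α_N) ∈ ℂ^N with N > d. Then there exists a pair (f,g) ∈ S̃(α) which is a pair of dual frames (i.e. ∑_{m=1}^N ⟨x, g_m⟩ f_m = x for all x ∈ H) if and only if ∑_{m=1}^N α_m = d. -/
open scoped ComplexInnerProductSpace

/- `H` is a complex inner product space of finite dimension `d = Module.finrank ℂ H`.
The paper's inner product `⟨x, y⟩` is linear in the first argument, hence it corresponds to
Mathlib's `⟪y, x⟫ = inner y x` (Mathlib's inner product is linear in the second argument). -/
variable {H : Type*} [NormedAddCommGroup H] [InnerProductSpace ℂ H] [FiniteDimensional ℂ H]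

theorem aux_base_case (hd : 1 ≤ Module.finrank ℂ H)
    (α : Fin (Module.finrank ℂ H + 1) → ℂ)
    (hsum : ∑ m, α m = (Module.finrank ℂ H : ℂ)) :
    ∃ f g : Fin (Module.finrank ℂ H + 1) → H, (∀ m, ⟪g m, f m⟫ = α m) ∧
      (∀ x : H, ∑ m, (⟪g m, x⟫) • f m = x) ∧ (∀ m, g m ≠ 0) := by
  set e := stdOrthonormalBasis ℂ H with he
  have hee : ∀ k l, ⟪e k, e l⟫ = if k = l then 1 else 0 :=
    fun k l => orthonormal_iff_ite.mp (stdOrthonormalBasis ℂ H).orthonormal k l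
  -- find j with α j ≠ 1
  have hj : ∃ j, α j ≠ 1 := by
    by_contra h
    push_neg at h
    have h1 : ∑ m, α m = ((Module.finrank ℂ H : ℂ) + 1) := by
      simp [h, Finset.sum_const]
    rw [hsum] at h1
    have h2 : (0:ℂ) = 1 := by linear_combination h1
    exact zero_ne_one h2
  obtain ⟨j, hj⟩ := hj
  set β : Fin (Module.finrank ℂ H + 1) → ℂ := fun m => 1 - α m with hβ
  have hβj : β j ≠ 0 := sub_ne_zero.mpr (Ne.symm hj)
  have hβsum : β j + ∑ k, β (j.succAbove k) = 1 := by
    have h1 : ∑ m, β m = β j + ∑ k, β (j.succAbove k) :=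
      Fin.sum_univ_succAbove β j
    rw [← h1, hβ]
    have h2 : ∑ m : Fin (Module.finrank ℂ H + 1), (1 - α m)
        = ((Module.finrank ℂ H : ℂ) + 1) - ∑ m, α m := by
      rw [Finset.sum_sub_distrib]
      simp [Finset.sum_const]
    rw [h2, hsum]; ring
  set u : H := ∑ k, e k with hu
  have hux : ∀ x : H, ⟪u, x⟫ = ∑ k, ⟪e k, x⟫ := by
    intro x; rw [hu]; exact sum_inner _ _ _
  have hue : ∀ l, ⟪u, e l⟫ = 1 := by
    intro l
    rw [hux]
    simp [hee]
  have hu0 : u ≠ 0 := by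
    intro h
    have h2 := hue ⟨0, hd⟩
    rw [h, inner_zero_left] at h2
    exact one_ne_zero h2.symm
  set v : H := ∑ k, β (j.succAbove k) • e k with hv
  have huv : ⟪u, v⟫ = 1 - β j := by
    rw [hv, inner_sum]
    simp only [inner_smul_right, hue, mul_one]
    linear_combination hβsum
  set f : Fin (Module.finrank ℂ H + 1) → H := j.insertNth ((-(β j)⁻¹) • v) (fun k => e k)
    with hf
  set g : Fin (Module.finrank ℂ H + 1) → H :=
    j.insertNth ((-(starRingEnd ℂ (β j))) • u)
      (fun k => e k - (starRingEnd ℂ (β (j.succAbove k))) • u) with hg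
  refine ⟨f, g, ?_, ?_, ?_⟩
  · -- inner products
    intro m
    refine j.succAboveCases ?_ ?_ m
    · rw [hf, hg, Fin.insertNth_apply_same, Fin.insertNth_apply_same,
        inner_smul_left, inner_smul_right, huv]
      simp only [map_neg, RingHom.id_apply, starRingEnd_self_apply]
      field_simp
      ring
    · intro k
      rw [hf, hg, Fin.insertNth_apply_succAbove, Fin.insertNth_apply_succAbove,
        inner_sub_left, inner_smul_left, hee, hue, starRingEnd_self_apply]
      simp [hβ]
  · -- duality
    intro x
    rw [Fin.sum_univ_succAbove _ j]
    have hjterm : (⟪g j, x⟫) • f j = (⟪u, x⟫) • v := by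
      rw [hf, hg, Fin.insertNth_apply_same, Fin.insertNth_apply_same,
        inner_smul_left]
      simp only [map_neg, starRingEnd_self_apply]
      rw [smul_smul]
      congr 1
      field_simp
    have hkterm : ∀ k, (⟪g (j.succAbove k), x⟫) • f (j.succAbove k)
        = (⟪e k, x⟫) • e k - (⟪u, x⟫) • (β (j.succAbove k) • e k) := by
      intro k
      rw [hf, hg, Fin.insertNth_apply_succAbove, Fin.insertNth_apply_succAbove,
        inner_sub_left, inner_smul_left, starRingEnd_self_apply, sub_smul,
        smul_smul, mul_comm (β (j.succAbove k)) (⟪u, x⟫ : ℂ)]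
    rw [hjterm, Finset.sum_congr rfl (fun k _ => hkterm k), Finset.sum_sub_distrib,
      ← Finset.smul_sum, ← hv]
    have hrepr : ∑ k, (⟪e k, x⟫) • e k = x := (stdOrthonormalBasis ℂ H).sum_repr' x
    rw [hrepr]
    abel
  · -- g nonzero
    intro m
    refine j.succAboveCases ?_ ?_ m
    · rw [hg, Fin.insertNth_apply_same]
      exact smul_ne_zero (neg_ne_zero.mpr (star_ne_zero.mpr hβj)) hu0
    · intro k
      rw [hg, Fin.insertNth_apply_succAbove]
      intro hzero
      have heq : e k = (starRingEnd ℂ (β (j.succAbove k))) • u := by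
        rwa [sub_eq_zero] at hzero
      have hβ1 : β (j.succAbove k) = 1 := by
        have h1 : (⟪(starRingEnd ℂ (β (j.succAbove k))) • u, e k⟫ : ℂ) = 1 := by
          rw [← heq]; simp [hee]
        rwa [inner_smul_left, starRingEnd_self_apply, hue, mul_one] at h1
      have heku : e k = u := by rw [heq, hβ1]; simp
      rcases eq_or_lt_of_le hd with hd1 | hd2
      · -- d = 1
        have hsing : Subsingleton (Fin (Module.finrank ℂ H)) := by
          rw [← hd1]; infer_instance
        have h5 : β j + β (j.succAbove k) = 1 := by
          rw [← hβsum]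
          congr 1
          rw [Finset.sum_eq_single_of_mem k (Finset.mem_univ k)]
          intro b _ hb; exact absurd (Subsingleton.elim b k) hb
        rw [hβ1] at h5
        exact hβj (by linear_combination h5)
      · -- d ≥ 2
        haveI : Nontrivial (Fin (Module.finrank ℂ H)) :=
          Fin.nontrivial_iff_two_le.mpr hd2
        obtain ⟨k', hk'⟩ : ∃ k', k' ≠ k := exists_ne k
        have h0 : (⟪e k', e k⟫ : ℂ) = 0 := by simp [hee, hk']
        have h1 : (⟪e k', u⟫ : ℂ) = 1 := by
          rw [hu, inner_sum]
          simp [hee]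
        rw [heku, h1] at h0
        exact one_ne_zero h0

theorem aux_exists_dual (hd : 1 ≤ Module.finrank ℂ H) :
    ∀ N : ℕ, Module.finrank ℂ H + 1 ≤ N → ∀ α : Fin N → ℂ,
    ∑ m, α m = (Module.finrank ℂ H : ℂ) →
    ∃ f g : Fin N → H, (∀ m, ⟪g m, f m⟫ = α m) ∧
      (∀ x : H, ∑ m, (⟪g m, x⟫) • f m = x) ∧ (∀ m, g m ≠ 0) := by
  intro N hN
  induction N, hN using Nat.le_induction with
  | base => exact aux_base_case hd
  | succ N hN ih =>
    intro α hsum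
    have hNpos : 0 < N := by omega
    set z : Fin N := ⟨0, hNpos⟩ with hz
    set αl : ℂ := α (Fin.last N) with hαl
    set α' : Fin N → ℂ := fun m => α m.castSucc + (if m = z then αl else 0) with hα'
    have hsum' : ∑ m, α' m = (Module.finrank ℂ H : ℂ) := by
      rw [hα']
      rw [Finset.sum_add_distrib, Finset.sum_ite_eq' Finset.univ z (fun _ => αl)]
      simp only [Finset.mem_univ, if_true]
      rw [← hsum, Fin.sum_univ_castSucc]
    obtain ⟨f', g', h1, h2, h3⟩ := ih α' hsum'
    obtain ⟨i, hc⟩ : ∃ i : Fin N, (⟪g' z, f' i⟫ : ℂ) ≠ 0 := by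
      by_contra h
      push_neg at h
      have hgz : (⟪g' z, g' z⟫ : ℂ) = 0 := by
        have h4 : (⟪g' z, g' z⟫ : ℂ) = ⟪g' z, ∑ m, (⟪g' m, g' z⟫ : ℂ) • f' m⟫ := by
          rw [h2 (g' z)]
        rw [inner_sum] at h4
        simp only [inner_smul_right] at h4
        rw [h4]
        exact Finset.sum_eq_zero fun m _ => by rw [h m, mul_zero]
      exact h3 z (inner_self_eq_zero.mp hgz)
    set c : ℂ := ⟪g' z, f' i⟫ with hcc
    set lam : ℂ := αl / c with hlam
    set f'' : Fin N → H := fun m => f' m + (if m = z then (-lam) • f' i else 0) with hf''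
    set f : Fin (N + 1) → H := Fin.snoc f'' (lam • f' i) with hf
    set g : Fin (N + 1) → H := Fin.snoc g' (g' z) with hg
    refine ⟨f, g, ?_, ?_, ?_⟩
    · intro m
      refine Fin.lastCases ?_ ?_ m
      · rw [hf, hg, Fin.snoc_last, Fin.snoc_last, inner_smul_right, ← hcc,
          hlam, div_mul_cancel₀ _ hc, hαl]
      · intro m'
        rw [hf, hg, Fin.snoc_castSucc, Fin.snoc_castSucc, hf'', inner_add_right]
        by_cases hm : m' = z
        · rw [hm, if_pos rfl, inner_smul_right, ← hcc, h1 z, hα']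
          simp only [if_pos rfl, ↓reduceIte]
          rw [hlam]
          field_simp
          ring
        · rw [if_neg hm, inner_zero_right, add_zero, h1 m', hα']
          simp only [if_neg hm, add_zero]
    · intro x
      rw [Fin.sum_univ_castSucc]
      have hlast : (⟪g (Fin.last N), x⟫) • f (Fin.last N) = (⟪g' z, x⟫) • lam • f' i := by
        rw [hf, hg, Fin.snoc_last, Fin.snoc_last]
      have hrest : ∀ m : Fin N, (⟪g m.castSucc, x⟫) • f m.castSucc
          = (⟪g' m, x⟫) • f' m + (if m = z then (⟪g' z, x⟫) • (-lam) • f' i else 0) := by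
        intro m
        rw [hf, hg, Fin.snoc_castSucc, Fin.snoc_castSucc, hf'', smul_add]
        congr 1
        by_cases hm : m = z
        · rw [hm, if_pos rfl, if_pos rfl]
        · rw [if_neg hm, if_neg hm, smul_zero]
      rw [hlast, Finset.sum_congr rfl (fun m _ => hrest m), Finset.sum_add_distrib,
        Finset.sum_ite_eq' Finset.univ z (fun _ => (⟪g' z, x⟫) • (-lam) • f' i),
        h2 x]
      simp only [Finset.mem_univ, if_true, neg_smul, smul_neg]
      abel
    · intro m
      refine Fin.lastCases ?_ ?_ m
      · rw [hg, Fin.snoc_last]; exact h3 z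
      · intro m'; rw [hg, Fin.snoc_castSucc]; exact h3 m'

/-- for `N > d`, there exists a pair of dual frames `(f,g) ∈ S̃(α)`
(i.e. with `⟨f m, g m⟩ = α m` for all `m` and `∑ m, ⟨x, g m⟩ f m = x` for all `x ∈ H`)
iff `∑ m, α m = d`. -/
theorem dual_frames_iff_sum_alpha {N : ℕ} (hd : 1 ≤ Module.finrank ℂ H)
    (hNd : Module.finrank ℂ H < N) (α : Fin N → ℂ) :
    (∃ f g : Fin N → H, (∀ m, ⟪g m, f m⟫ = α m) ∧
      ∀ x : H, ∑ m, (⟪g m, x⟫) • f m = x) ↔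
    ∑ m, α m = (Module.finrank ℂ H : ℂ) := by
  constructor
  · rintro ⟨f, g, h1, h2⟩
    have hbb : ∀ i, (⟪stdOrthonormalBasis ℂ H i, stdOrthonormalBasis ℂ H i⟫ : ℂ) = 1 := by
      intro i
      have := orthonormal_iff_ite.mp (stdOrthonormalBasis ℂ H).orthonormal i i
      simpa using this
    set b := stdOrthonormalBasis ℂ H with hb
    calc ∑ m, α m = ∑ m, ⟪g m, f m⟫ :=
          Finset.sum_congr rfl fun m _ => (h1 m).symm
      _ = ∑ m, ∑ i, (⟪g m, b i⟫ : ℂ) * ⟪b i, f m⟫ :=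
          Finset.sum_congr rfl fun m _ => (b.sum_inner_mul_inner _ _).symm
      _ = ∑ i, ∑ m, (⟪g m, b i⟫ : ℂ) * ⟪b i, f m⟫ := Finset.sum_comm
      _ = ∑ i, (⟪b i, b i⟫ : ℂ) := by
          refine Finset.sum_congr rfl fun i _ => ?_
          have h4 : (⟪b i, b i⟫ : ℂ) = ⟪b i, ∑ m, (⟪g m, b i⟫ : ℂ) • f m⟫ := by
            rw [h2 (b i)]
          rw [inner_sum] at h4
          simp only [inner_smul_right] at h4
          rw [h4]
      _ = (Module.finrank ℂ H : ℂ) := by simp [hbb]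
  · intro hsum
    obtain ⟨f, g, h1, h2, _⟩ := aux_exists_dual hd N hNd α hsum
    exact ⟨f, g, h1, h2⟩
end
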